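/- arXiv:1312.6337 — 2 statements merged into one kernel-verified Lean document; each statement's English description precedes it below -/
import Mathlib

section
/- For every even integer Δ ≥ 2 there exists a finite simple graph Γ which is arc-transitive, regular of degree Δ, has diameter at most 2, and has at least (Δ + 2)²/4 vertices. -/
open Equiv Finset

/-- A graph is arc-transitive if its automorphism group acts transitively on the set of
arcs (ordered pairs of adjacent vertices). -/
def SimpleGraph.IsArcTransitive {V : Type*} (G : SimpleGraph V) : Prop :=
  ∀ u v x y : V, G.Adj u v → G.Adj x y → ∃ φ : G ≃g G, φ u = x ∧ φ v = y

/-- The rook's graph on `Fin n × Fin n`. -/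
def rook (n : ℕ) : SimpleGraph (Fin n × Fin n) where
  Adj p q := (p.1 = q.1 ∧ p.2 ≠ q.2) ∨ (p.2 = q.2 ∧ p.1 ≠ q.1)
  symm := by
    constructor; intro p q h
    rcases h with ⟨h1, h2⟩ | ⟨h1, h2⟩
    · exact Or.inl ⟨h1.symm, fun e => h2 e.symm⟩
    · exact Or.inr ⟨h1.symm, fun e => h2 e.symm⟩
  loopless := by
    constructor; intro p h
    rcases h with ⟨_, h2⟩ | ⟨_, h2⟩ <;> exact h2 rfl

instance rookDecAdj (n : ℕ) : DecidableRel (rook n).Adj :=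
  fun _ _ => inferInstanceAs (Decidable (_ ∨ _))

lemma rook_adj {n : ℕ} {p q : Fin n × Fin n} :
    (rook n).Adj p q ↔ (p.1 = q.1 ∧ p.2 ≠ q.2) ∨ (p.2 = q.2 ∧ p.1 ≠ q.1) := Iff.rfl

/-- Automorphism of the rook graph from a pair of permutations. -/
def rookPermIso (n : ℕ) (σ τ : Perm (Fin n)) : rook n ≃g rook n where
  toEquiv := σ.prodCongr τ
  map_rel_iff' := by
    intro p q
    simp only [rook_adj, Equiv.prodCongr_apply, Prod.map_fst, Prod.map_snd,
      σ.injective.eq_iff, τ.injective.eq_iff, σ.injective.ne_iff, τ.injective.ne_iff]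

lemma rookPermIso_apply {n : ℕ} (σ τ : Perm (Fin n)) (p : Fin n × Fin n) :
    (rookPermIso n σ τ) p = (σ p.1, τ p.2) := rfl

/-- Coordinate-swapping automorphism of the rook graph. -/
def rookSwapIso (n : ℕ) : rook n ≃g rook n where
  toEquiv := Equiv.prodComm _ _
  map_rel_iff' := by
    intro p q
    simp only [rook_adj, Equiv.prodComm_apply, Prod.fst_swap, Prod.snd_swap]
    tauto

lemma rookSwapIso_apply {n : ℕ} (p : Fin n × Fin n) :
    (rookSwapIso n) p = p.swap := rfl

lemma exists_perm_two {α : Type*} [DecidableEq α] {b b' d d' : α}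
    (h1 : b ≠ b') (h2 : d ≠ d') : ∃ τ : Perm α, τ b = d ∧ τ b' = d' := by
  have hmd : Equiv.swap b d b' ≠ d := by
    intro h
    apply h1
    have := (Equiv.swap b d).injective
      (show Equiv.swap b d b = Equiv.swap b d b' by rw [h, Equiv.swap_apply_left])
    exact this
  refine ⟨(Equiv.swap b d).trans (Equiv.swap (Equiv.swap b d b') d'), ?_, ?_⟩
  · simp only [Equiv.trans_apply, Equiv.swap_apply_left]
    exact Equiv.swap_apply_of_ne_of_ne (Ne.symm hmd) h2
  · simp only [Equiv.trans_apply, Equiv.swap_apply_left]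

lemma row_case {n : ℕ} {u v x y : Fin n × Fin n}
    (hu1 : u.1 = v.1) (hu2 : u.2 ≠ v.2) (hx1 : x.1 = y.1) (hx2 : x.2 ≠ y.2) :
    ∃ φ : rook n ≃g rook n, φ u = x ∧ φ v = y := by
  obtain ⟨τ, ht1, ht2⟩ := exists_perm_two hu2 hx2
  refine ⟨rookPermIso n (Equiv.swap u.1 x.1) τ, ?_, ?_⟩
  · rw [rookPermIso_apply]
    exact Prod.ext (by simp [Equiv.swap_apply_left]) (by simpa using ht1)
  · rw [rookPermIso_apply]
    exact Prod.ext (by simp [← hu1, Equiv.swap_apply_left, hx1]) (by simpa using ht2)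

lemma rook_arcTransitive (n : ℕ) : (rook n).IsArcTransitive := by
  intro u v x y huv hxy
  rcases huv with ⟨h1, h2⟩ | ⟨h1, h2⟩ <;> rcases hxy with ⟨g1, g2⟩ | ⟨g1, g2⟩
  · exact row_case h1 h2 g1 g2
  · -- u row arc, x column arc: map to swapped targets then swap
    obtain ⟨φ, hφ1, hφ2⟩ := row_case (u := u) (v := v) (x := x.swap) (y := y.swap)
      h1 h2 (by simpa using g1) (by simpa using g2)
    refine ⟨φ.trans (rookSwapIso n), ?_, ?_⟩
    · simp [RelIso.trans_apply, hφ1, rookSwapIso_apply]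
    · simp [RelIso.trans_apply, hφ2, rookSwapIso_apply]
  · obtain ⟨φ, hφ1, hφ2⟩ := row_case (u := u.swap) (v := v.swap) (x := x) (y := y)
      (by simpa using h1) (by simpa using h2) g1 g2
    refine ⟨(rookSwapIso n).trans φ, ?_, ?_⟩
    · simp [RelIso.trans_apply, rookSwapIso_apply, hφ1]
    · simp [RelIso.trans_apply, rookSwapIso_apply, hφ2]
  · obtain ⟨φ, hφ1, hφ2⟩ := row_case (u := u.swap) (v := v.swap) (x := x.swap) (y := y.swap)
      (by simpa using h1) (by simpa using h2) (by simpa using g1) (by simpa using g2)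
    refine ⟨(rookSwapIso n).trans (φ.trans (rookSwapIso n)), ?_, ?_⟩
    · simp [RelIso.trans_apply, rookSwapIso_apply, hφ1]
    · simp [RelIso.trans_apply, rookSwapIso_apply, hφ2]

lemma rook_neighborFinset (k : ℕ) (v : Fin (k+1) × Fin (k+1)) :
    (rook (k+1)).neighborFinset v =
      ((Finset.univ.erase v.2).image (Prod.mk v.1)) ∪
      ((Finset.univ.erase v.1).image (fun x => (x, v.2))) := by
  ext p
  simp only [SimpleGraph.mem_neighborFinset, rook_adj, Finset.mem_union, Finset.mem_image,
    Finset.mem_erase, Finset.mem_univ, and_true, Prod.ext_iff]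
  constructor
  · rintro (⟨h1, h2⟩ | ⟨h1, h2⟩)
    · exact Or.inl ⟨p.2, fun e => h2 e.symm, h1, rfl⟩
    · exact Or.inr ⟨p.1, fun e => h2 e.symm, rfl, h1⟩
  · rintro (⟨a, ha, h1, h2⟩ | ⟨a, ha, h1, h2⟩)
    · exact Or.inl ⟨h1, fun e => ha (h2 ▸ e.symm)⟩
    · exact Or.inr ⟨h2, fun e => ha (h1 ▸ e.symm)⟩

lemma rook_degree (k : ℕ) (v : Fin (k+1) × Fin (k+1)) :
    ((rook (k+1)).neighborSet v).ncard = k + k := by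
  rw [Set.ncard_eq_toFinset_card', Set.toFinset_card,
    SimpleGraph.card_neighborSet_eq_degree,
    show (rook (k+1)).degree v = ((rook (k+1)).neighborFinset v).card from rfl,
    rook_neighborFinset]
  rw [Finset.card_union_of_disjoint]
  · rw [Finset.card_image_of_injective _ (fun a b h => by simpa using (Prod.ext_iff.mp h).2),
      Finset.card_image_of_injective _ (fun a b h => by simpa using (Prod.ext_iff.mp h).1)]
    rw [Finset.card_erase_of_mem (Finset.mem_univ _),
      Finset.card_erase_of_mem (Finset.mem_univ _)]
    simp
  · rw [Finset.disjoint_left]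
    rintro p hp hq
    simp only [Finset.mem_image, Finset.mem_erase, Finset.mem_univ, and_true,
      Prod.ext_iff] at hp hq
    obtain ⟨a, ha, h1, h2⟩ := hp
    obtain ⟨b, hb, g1, g2⟩ := hq
    exact ha (h2 ▸ g2.symm)

lemma rook_walk (k : ℕ) (u v : Fin (k+1) × Fin (k+1)) :
    ∃ w : (rook (k+1)).Walk u v, w.length ≤ 2 := by
  by_cases h1 : u.1 = v.1
  · by_cases h2 : u.2 = v.2
    · have : u = v := Prod.ext h1 h2
      subst this
      exact ⟨SimpleGraph.Walk.nil, by simp⟩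
    · exact ⟨SimpleGraph.Walk.cons (show (rook (k+1)).Adj u v from Or.inl ⟨h1, h2⟩) SimpleGraph.Walk.nil, by simp⟩
  · by_cases h2 : u.2 = v.2
    · exact ⟨SimpleGraph.Walk.cons (show (rook (k+1)).Adj u v from Or.inr ⟨h2, h1⟩) SimpleGraph.Walk.nil, by simp⟩
    · have a1 : (rook (k+1)).Adj u (u.1, v.2) := Or.inl ⟨rfl, h2⟩
      have a2 : (rook (k+1)).Adj (u.1, v.2) v := Or.inr ⟨rfl, h1⟩
      exact ⟨SimpleGraph.Walk.cons a1 a2.toWalk, by simp⟩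

theorem arcTransitive_diameter_two_lower_bound_even_degree
    (Δ : ℕ) (hΔ : 2 ≤ Δ) (hEven : Even Δ) :
    ∃ (V : Type) (_ : Fintype V) (G : SimpleGraph V),
      G.IsArcTransitive ∧
      (∀ v : V, (G.neighborSet v).ncard = Δ) ∧
      G.Connected ∧ (∀ u v : V, G.dist u v ≤ 2) ∧
      (Δ + 2) ^ 2 ≤ 4 * Fintype.card V := by
  obtain ⟨k, hk⟩ := hEven
  refine ⟨Fin (k+1) × Fin (k+1), inferInstance, rook (k+1),
    rook_arcTransitive _, ?_, ?_, ?_, ?_⟩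
  · intro v; rw [rook_degree, hk]
  · constructor
    · intro u v
      obtain ⟨w, _⟩ := rook_walk k u v
      exact w.reachable
  · intro u v
    obtain ⟨w, hw⟩ := rook_walk k u v
    exact (SimpleGraph.dist_le w).trans hw
  · have : Fintype.card (Fin (k+1) × Fin (k+1)) = (k+1) * (k+1) := by
      simp [Fintype.card_prod]
    rw [this, hk]
    nlinarith [sq_nonneg k]
end

section
/- Let d ≥ 3 be an integer and q a prime power (the finite field F_q having q elements). The projective flag graph Γ(d,q) is arc-transitive: for any two arcs (ordered pairs of adjacent vertices) of Γ(d,q) there is a graph automorphism of Γ(d,q) mapping the first arc to the second. -/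
open Module

/-- The (point, line)-flags of the projective space `PG(d-1,q)`: pairs `(σ, L)` where
`σ` is a 1-dimensional linear subspace of `F^d`, `L` is a 2-dimensional linear subspace,
and `σ ⊆ L`. -/
abbrev ProjFlag (F : Type*) [Field F] (d : ℕ) : Type _ :=
  {p : Submodule F (Fin d → F) × Submodule F (Fin d → F) //
    finrank F p.1 = 1 ∧ finrank F p.2 = 2 ∧ p.1 ≤ p.2}

/-- The projective flag graph `Γ(d,q)`: vertices are (point, line)-flags of `PG(d-1,q)`,
two flags `(σ, L)` and `(τ, N)` being adjacent iff `L` and `N` are intersecting lines,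
i.e. `L ≠ N` and `L ∩ N` is a (projective) point. -/
def projFlagGraph (F : Type*) [Field F] (d : ℕ) : SimpleGraph (ProjFlag F d) where
  Adj x y := x.1.2 ≠ y.1.2 ∧ finrank F ↥(x.1.2 ⊓ y.1.2) = 1
  symm := by
    constructor
    rintro x y ⟨h1, h2⟩
    exact ⟨h1.symm, by rwa [inf_comm] at h2⟩
  loopless := by
    constructor
    rintro x ⟨h1, _⟩
    exact h1 rfl

section Aux

variable {F : Type*} [Field F] {d : ℕ}

lemma finrank_map_equiv (e : (Fin d → F) ≃ₗ[F] (Fin d → F)) (p : Submodule F (Fin d → F)) :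
    finrank F (Submodule.map (e : (Fin d → F) →ₗ[F] (Fin d → F)) p) = finrank F p := LinearEquiv.finrank_map_eq e p

/-- A linear automorphism of `F^d` induces an automorphism of the flag graph. -/
noncomputable def linearGraphIso (e : (Fin d → F) ≃ₗ[F] (Fin d → F)) :
    projFlagGraph F d ≃g projFlagGraph F d where
  toEquiv :=
    { toFun := fun x => ⟨(x.1.1.map (e : (Fin d → F) →ₗ[F] (Fin d → F)), x.1.2.map (e : (Fin d → F) →ₗ[F] (Fin d → F))), by
        obtain ⟨h1, h2, h3⟩ := x.2
        exact ⟨by rw [finrank_map_equiv]; exact h1, by rw [finrank_map_equiv]; exact h2,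
          Submodule.map_mono h3⟩⟩
      invFun := fun x => ⟨(x.1.1.map (e.symm : (Fin d → F) →ₗ[F] (Fin d → F)), x.1.2.map (e.symm : (Fin d → F) →ₗ[F] (Fin d → F))), by
        obtain ⟨h1, h2, h3⟩ := x.2
        exact ⟨by rw [finrank_map_equiv]; exact h1, by rw [finrank_map_equiv]; exact h2,
          Submodule.map_mono h3⟩⟩
      left_inv := fun x => Subtype.ext (Prod.ext
        (by show Submodule.map (e.symm : (Fin d → F) →ₗ[F] (Fin d → F)) (Submodule.map (e : (Fin d → F) →ₗ[F] (Fin d → F)) _) = _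
            rw [Submodule.map_symm_eq_iff])
        (by show Submodule.map (e.symm : (Fin d → F) →ₗ[F] (Fin d → F)) (Submodule.map (e : (Fin d → F) →ₗ[F] (Fin d → F)) _) = _
            rw [Submodule.map_symm_eq_iff]))
      right_inv := fun x => Subtype.ext (Prod.ext
        (by show Submodule.map (e : (Fin d → F) →ₗ[F] (Fin d → F)) (Submodule.map (e.symm : (Fin d → F) →ₗ[F] (Fin d → F)) _) = _
            rw [← Submodule.map_symm_eq_iff])
        (by show Submodule.map (e : (Fin d → F) →ₗ[F] (Fin d → F)) (Submodule.map (e.symm : (Fin d → F) →ₗ[F] (Fin d → F)) _) = _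
            rw [← Submodule.map_symm_eq_iff])) }
  map_rel_iff' := by
    intro x y
    show (Submodule.map (e : (Fin d → F) →ₗ[F] (Fin d → F)) x.1.2 ≠ Submodule.map (e : (Fin d → F) →ₗ[F] (Fin d → F)) y.1.2 ∧
      finrank F ↥(Submodule.map (e : (Fin d → F) →ₗ[F] (Fin d → F)) x.1.2 ⊓ Submodule.map (e : (Fin d → F) →ₗ[F] (Fin d → F)) y.1.2) = 1) ↔ _
    rw [← Submodule.map_inf (e : (Fin d → F) →ₗ[F] (Fin d → F)) e.injective, finrank_map_equiv]
    constructor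
    · rintro ⟨h1, h2⟩
      exact ⟨fun hh => h1 (by rw [hh]), h2⟩
    · rintro ⟨h1, h2⟩
      exact ⟨fun hh => h1 (Submodule.map_injective_of_injective e.injective hh), h2⟩

/-- Any permutation of flags preserving the line component is a graph automorphism. -/
def fiberIso (ψ : ProjFlag F d ≃ ProjFlag F d) (h : ∀ z, ((ψ z).1.2 = z.1.2)) :
    projFlagGraph F d ≃g projFlagGraph F d where
  toEquiv := ψ
  map_rel_iff' := by
    intro a b
    show ((ψ a).1.2 ≠ (ψ b).1.2 ∧ _) ↔ (a.1.2 ≠ b.1.2 ∧ _)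
    rw [h a, h b]

lemma swap_line [DecidableEq (ProjFlag F d)] (u w : ProjFlag F d) (h : u.1.2 = w.1.2) (z : ProjFlag F d) :
    ((Equiv.swap u w) z).1.2 = z.1.2 := by
  rcases eq_or_ne z u with rfl | hzu
  · rw [Equiv.swap_apply_left, ← h]
  rcases eq_or_ne z w with rfl | hzw
  · rw [Equiv.swap_apply_right, h]
  · rw [Equiv.swap_apply_of_ne_of_ne hzu hzw]

lemma exists_basis_of_adj (hd : 3 ≤ d) {u v : ProjFlag F d}
    (h : (projFlagGraph F d).Adj u v) :
    ∃ B : Basis (Fin d) F (Fin d → F),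
      u.1.2 = Submodule.span F {B ⟨0, by omega⟩, B ⟨1, by omega⟩} ∧
      v.1.2 = Submodule.span F {B ⟨1, by omega⟩, B ⟨2, by omega⟩} := by
  classical
  obtain ⟨hne, hinf⟩ := h
  set L := u.1.2 with hLdef
  set N := v.1.2 with hNdef
  have hL : finrank F L = 2 := u.2.2.1
  have hN : finrank F N = 2 := v.2.2.1
  -- a nonzero vector in the intersection
  have hbot : L ⊓ N ≠ ⊥ := by
    intro hb; rw [hb, finrank_bot] at hinf; omega
  obtain ⟨p, hpmem, hp0⟩ := Submodule.ne_bot_iff _ |>.mp hbot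
  have hspanp : Submodule.span F {p} = L ⊓ N := by
    apply Submodule.eq_of_le_of_finrank_le
    · rw [Submodule.span_le, Set.singleton_subset_iff]; exact hpmem
    · rw [hinf, finrank_span_singleton hp0]
  -- a ∈ L \ (L ⊓ N), b ∈ N \ (L ⊓ N)
  have hltL : L ⊓ N < L := lt_of_le_of_ne inf_le_left (by
    intro heq; rw [heq, hL] at hinf; omega)
  have hltN : L ⊓ N < N := lt_of_le_of_ne inf_le_right (by
    intro heq; rw [heq, hN] at hinf; omega)
  obtain ⟨a, haL, haI⟩ := SetLike.exists_of_lt hltL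
  obtain ⟨b, hbN, hbI⟩ := SetLike.exists_of_lt hltN
  have haP : a ∉ Submodule.span F {p} := by rw [hspanp]; exact haI
  have hbP : b ∉ Submodule.span F {p} := by rw [hspanp]; exact hbI
  have hlip : LinearIndependent F ![p] := by
    rw [linearIndependent_unique_iff]; simpa using hp0
  have hrangep : Set.range ![p] = {p} := by simp
  have hliap : LinearIndependent F ![a, p] := by
    rw [show (![a, p] : Fin 2 → (Fin d → F)) = Fin.cons a ![p] from rfl,
      linearIndependent_fin_cons, hrangep]
    exact ⟨hlip, haP⟩
  have hlibp : LinearIndependent F ![b, p] := by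
    rw [show (![b, p] : Fin 2 → (Fin d → F)) = Fin.cons b ![p] from rfl,
      linearIndependent_fin_cons, hrangep]
    exact ⟨hlip, hbP⟩
  have hrangeap : Set.range ![a, p] = {a, p} := by
    simp [Matrix.range_cons, Matrix.range_empty]; exact Set.pair_comm p a
  have hrangebp : Set.range ![b, p] = {b, p} := by
    simp [Matrix.range_cons, Matrix.range_empty]; exact Set.pair_comm p b
  have hspanL : Submodule.span F {a, p} = L := by
    apply Submodule.eq_of_le_of_finrank_le
    · rw [Submodule.span_le, Set.insert_subset_iff, Set.singleton_subset_iff]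
      exact ⟨haL, hpmem.1⟩
    · rw [hL]
      have := finrank_span_eq_card hliap
      rw [hrangeap] at this
      simp at this; omega
  have hspanN : Submodule.span F {b, p} = N := by
    apply Submodule.eq_of_le_of_finrank_le
    · rw [Submodule.span_le, Set.insert_subset_iff, Set.singleton_subset_iff]
      exact ⟨hbN, hpmem.2⟩
    · rw [hN]
      have := finrank_span_eq_card hlibp
      rw [hrangebp] at this
      simp at this; omega
  have hli3 : LinearIndependent F ![a, b, p] := by
    rw [show (![a, b, p] : Fin 3 → (Fin d → F)) = Fin.cons a ![b, p] from rfl,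
      linearIndependent_fin_cons, hrangebp, hspanN]
    refine ⟨hlibp, fun haN => haI ⟨haL, haN⟩⟩
  -- extend to a basis
  set S : Set (Fin d → F) := Set.range ![a, b, p] with hSdef
  have hs : LinearIndepOn F id S := (linearIndepOn_id_range_iff hli3.injective).mpr hli3
  set T := hs.extend (Set.subset_univ S) with hTdef
  have hST : S ⊆ T := hs.subset_extend _
  let B0 : Basis T F (Fin d → F) := Module.Basis.extend hs
  haveI : Fintype T := FiniteDimensional.fintypeBasisIndex B0
  have hcard : Fintype.card T = d := by
    rw [← Module.finrank_eq_card_basis B0, Module.finrank_fintype_fun_eq_card,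
      Fintype.card_fin]
  have haS : a ∈ S := ⟨0, rfl⟩
  have hbS : b ∈ S := ⟨1, rfl⟩
  have hpS : p ∈ S := ⟨2, rfl⟩
  have hinj := hli3.injective
  have hab : a ≠ b := fun hh => by
    simpa using hinj (show ![a, b, p] 0 = ![a, b, p] 1 by simp [hh])
  have hap : a ≠ p := fun hh => by
    simpa using hinj (show ![a, b, p] 0 = ![a, b, p] 2 by simp [hh])
  have hbp : b ≠ p := fun hh => by
    simpa using hinj (show ![a, b, p] 1 = ![a, b, p] 2 by simp [hh])
  let A : T := ⟨a, hST haS⟩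
  let Bb : T := ⟨b, hST hbS⟩
  let P : T := ⟨p, hST hpS⟩
  have hAP : A ≠ P := fun hh => hap (congrArg Subtype.val hh)
  have hAB : A ≠ Bb := fun hh => hab (congrArg Subtype.val hh)
  have hPB : P ≠ Bb := fun hh => hbp (congrArg Subtype.val hh).symm
  let i0 : Fin d := ⟨0, by omega⟩
  let i1 : Fin d := ⟨1, by omega⟩
  let i2 : Fin d := ⟨2, by omega⟩
  have h01 : i0 ≠ i1 := Fin.ne_of_val_ne (by norm_num)
  have h02 : i0 ≠ i2 := Fin.ne_of_val_ne (by norm_num)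
  have h12 : i1 ≠ i2 := Fin.ne_of_val_ne (by norm_num)
  have key : ∀ (f : T ≃ Fin d) (c : T) (i : Fin d) (x : T), x ≠ c → f x ≠ i →
      f.setValue c i x = f x := by
    intro f c i x hx hfx
    show ((Equiv.swap c (f.symm i)).trans f) x = f x
    rw [Equiv.trans_apply,
      Equiv.swap_apply_of_ne_of_ne hx (fun hh => hfx (by rw [hh, Equiv.apply_symm_apply]))]
  let g0 : T ≃ Fin d := Fintype.equivFinOfCardEq hcard
  let g1 : T ≃ Fin d := g0.setValue A i0
  let g2 : T ≃ Fin d := g1.setValue P i1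
  let g : T ≃ Fin d := g2.setValue Bb i2
  have hg1A : g1 A = i0 := Equiv.setValue_eq _ _ _
  have hg2A : g2 A = i0 := by
    rw [show g2 A = g1.setValue P i1 A from rfl, key g1 P i1 A hAP (by rw [hg1A]; exact h01)]
    exact hg1A
  have hg2P : g2 P = i1 := Equiv.setValue_eq _ _ _
  have hgA : g A = i0 := by
    rw [show g A = g2.setValue Bb i2 A from rfl,
      key g2 Bb i2 A hAB (by rw [hg2A]; exact h02)]
    exact hg2A
  have hgP : g P = i1 := by
    rw [show g P = g2.setValue Bb i2 P from rfl,
      key g2 Bb i2 P hPB (by rw [hg2P]; exact h12)]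
    exact hg2P
  have hgB : g Bb = i2 := Equiv.setValue_eq _ _ _
  let B : Basis (Fin d) F (Fin d → F) := B0.reindex g
  have hBA : B i0 = a := by
    rw [show B i0 = B0 (g.symm i0) from B0.reindex_apply g i0, ← hgA,
      Equiv.symm_apply_apply]
    exact Basis.extend_apply_self hs _
  have hBP : B i1 = p := by
    rw [show B i1 = B0 (g.symm i1) from B0.reindex_apply g i1, ← hgP,
      Equiv.symm_apply_apply]
    exact Basis.extend_apply_self hs _
  have hBB : B i2 = b := by
    rw [show B i2 = B0 (g.symm i2) from B0.reindex_apply g i2, ← hgB,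
      Equiv.symm_apply_apply]
    exact Basis.extend_apply_self hs _
  refine ⟨B, ?_, ?_⟩
  · rw [show (⟨0, by omega⟩ : Fin d) = i0 from rfl, show (⟨1, by omega⟩ : Fin d) = i1 from rfl,
      hBA, hBP, hspanL]
  · rw [show (⟨1, by omega⟩ : Fin d) = i1 from rfl, show (⟨2, by omega⟩ : Fin d) = i2 from rfl,
      hBP, hBB, Set.pair_comm, hspanN]

end Aux

theorem projFlagGraph_arcTransitive (d : ℕ) (hd : 3 ≤ d)
    (q : ℕ) (F : Type*) [Field F] [Fintype F] (hq : Fintype.card F = q) :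
    ∀ u v x y : ProjFlag F d,
      (projFlagGraph F d).Adj u v → (projFlagGraph F d).Adj x y →
        ∃ φ : projFlagGraph F d ≃g projFlagGraph F d, φ u = x ∧ φ v = y := by
  classical
  intro u v x y huv hxy
  obtain ⟨B1, hB1u, hB1v⟩ := exists_basis_of_adj hd huv
  obtain ⟨B2, hB2x, hB2y⟩ := exists_basis_of_adj hd hxy
  let e := B1.equiv B2 (Equiv.refl _)
  let Φ := linearGraphIso (d := d) (F := F) e
  have hmap : ∀ (i j : Fin d), Submodule.map (e : (Fin d → F) →ₗ[F] (Fin d → F)) (Submodule.span F {B1 i, B1 j})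
      = Submodule.span F {B2 i, B2 j} := by
    intro i j
    rw [Submodule.map_span, Set.image_pair]
    congr 1
    rw [show (e : (Fin d → F) →ₗ[F] (Fin d → F)) (B1 i) = B2 i from Basis.equiv_apply B1 i B2 (Equiv.refl _),
      show (e : (Fin d → F) →ₗ[F] (Fin d → F)) (B1 j) = B2 j from Basis.equiv_apply B1 j B2 (Equiv.refl _)]
  have hΦu : (Φ u).1.2 = x.1.2 := by
    show Submodule.map (e : (Fin d → F) →ₗ[F] (Fin d → F)) u.1.2 = x.1.2
    rw [hB1u, hB2x, hmap]
  have hΦv : (Φ v).1.2 = y.1.2 := by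
    show Submodule.map (e : (Fin d → F) →ₗ[F] (Fin d → F)) v.1.2 = y.1.2
    rw [hB1v, hB2y, hmap]
  let ψ : ProjFlag F d ≃ ProjFlag F d :=
    (Equiv.swap (Φ u) x).trans (Equiv.swap (Φ v) y)
  have hline : ∀ z, (ψ z).1.2 = z.1.2 := by
    intro z
    show ((Equiv.swap (Φ v) y) ((Equiv.swap (Φ u) x) z)).1.2 = z.1.2
    rw [swap_line _ _ (by rw [hΦv]) _, swap_line _ _ (by rw [hΦu]) _]
  let Ψ := fiberIso ψ hline
  refine ⟨Φ.trans Ψ, ?_, ?_⟩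
  · show ψ (Φ u) = x
    have h1 : (Equiv.swap (Φ u) x) (Φ u) = x := Equiv.swap_apply_left _ _
    show (Equiv.swap (Φ v) y) ((Equiv.swap (Φ u) x) (Φ u)) = x
    rw [h1]
    apply Equiv.swap_apply_of_ne_of_ne
    · intro hh; exact hxy.1 (by rw [← hΦv, ← hh])
    · intro hh; exact hxy.1 (by rw [hh])
  · show ψ (Φ v) = y
    show (Equiv.swap (Φ v) y) ((Equiv.swap (Φ u) x) (Φ v)) = y
    have h1 : (Equiv.swap (Φ u) x) (Φ v) = Φ v := by
      apply Equiv.swap_apply_of_ne_of_ne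
      · intro hh; exact hxy.1.symm (by rw [← hΦv, ← hΦu, hh])
      · intro hh; exact hxy.1.symm (by rw [← hΦv, hh])
    rw [h1, Equiv.swap_apply_left]
end
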